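/- For any finite poset P of height h and any k ≥ 2, every subfamily of the k-interval chain C_k^0 of size at least |P| + (h−1)(3k−5)·2^{k−2} contains P as a weak subposet; equivalently α(C_k^0, P) ≤ |P| + (h−1)(3k−5)·2^{k−2} − 1. -/

import Mathlib

/-- A family `𝒜 ⊆ 2^[n]` contains the poset `P` as a weak subposet. -/
def containsWeak {n : ℕ} (𝒜 : Finset (Finset (Fin n))) (P : Type*) [PartialOrder P] : Prop :=
  ∃ φ : P → Finset (Fin n), Function.Injective φ ∧ (∀ x, φ x ∈ 𝒜) ∧
    ∀ x y : P, x ≤ y → φ x ⊆ φ y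

/-- `h` is the height of the poset `P`: the maximum size of a chain in `P`. -/
def isHeight (P : Type*) [PartialOrder P] (h : ℕ) : Prop :=
  (∃ s : Finset P, IsChain (· ≤ ·) (s : Set P) ∧ s.card = h) ∧
  ∀ s : Finset P, IsChain (· ≤ ·) (s : Set P) → s.card ≤ h

/-- The initial segment `{1,…,i}` of `[n]`, as a subset of `Fin n`. -/
def initSeg (n i : ℕ) : Finset (Fin n) := Finset.univ.filter (fun x => (x : ℕ) < i)

/-- The `k`-interval chain `C_k^0 = ⋃_{i=0}^{n-k} [[i],[i+k]]`. -/
def intervalChain (n k : ℕ) : Finset (Finset (Fin n)) :=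
  (Finset.range (n - k + 1)).biUnion (fun i => Finset.Icc (initSeg n i) (initSeg n (i + k)))

open Finset

namespace IntervalChainProof

lemma mem_initSeg {n i : ℕ} {x : Fin n} : x ∈ initSeg n i ↔ (x : ℕ) < i := by
  simp [initSeg]

lemma initSeg_mono {n : ℕ} {i j : ℕ} (h : i ≤ j) : initSeg n i ⊆ initSeg n j := by
  intro x hx; rw [mem_initSeg] at *; omega

lemma initSeg_card (n i : ℕ) : (initSeg n i).card = min i n := by
  have : (initSeg n i).image Fin.val = Finset.range (min i n) := by
    ext j
    simp only [Finset.mem_image, Finset.mem_range, initSeg, Finset.mem_filter, Finset.mem_univ,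
      true_and, lt_min_iff]
    constructor
    · rintro ⟨x, hx, rfl⟩; exact ⟨hx, x.isLt⟩
    · rintro ⟨h1, h2⟩; exact ⟨⟨j, h2⟩, h1, rfl⟩
  have h2 := congrArg Finset.card this
  rwa [Finset.card_image_of_injective _ Fin.val_injective, Finset.card_range] at h2

lemma initSeg_self (n : ℕ) : initSeg n n = Finset.univ := by
  ext x; simp [mem_initSeg, x.isLt]

lemma mem_intervalChain {n k : ℕ} {S : Finset (Fin n)} (h : S ∈ intervalChain n k) :
    ∃ i, initSeg n i ⊆ S ∧ S ⊆ initSeg n (i + k) := by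
  simp only [intervalChain, Finset.mem_biUnion, Finset.mem_Icc] at h
  obtain ⟨i, _, h1, h2⟩ := h
  exact ⟨i, h1, h2⟩

variable {n k : ℕ}

/-- The "bottom" part of a cut at `t`. -/
def iB (n : ℕ) (𝒮 : Finset (Finset (Fin n))) (t : ℕ) : Finset (Finset (Fin n)) :=
  𝒮.filter (fun S => S ⊆ initSeg n t ∧ S ≠ initSeg n t)

/-- The "top" part of a cut at `t`. -/
def iR (n : ℕ) (𝒮 : Finset (Finset (Fin n))) (t : ℕ) : Finset (Finset (Fin n)) :=
  𝒮.filter (fun S => initSeg n t ⊆ S)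

/-- The crossers of a cut at `t`. -/
def iX (n : ℕ) (𝒮 : Finset (Finset (Fin n))) (t : ℕ) : Finset (Finset (Fin n)) :=
  𝒮.filter (fun S => ¬ S ⊆ initSeg n t ∧ ¬ initSeg n t ⊆ S)

lemma sum_pow_identity (s : ℕ) :
    ∑ j ∈ Finset.range (s + 1), (2 ^ (s + 1) - 2 ^ j) = s * 2 ^ (s + 1) + 1 := by
  induction s with
  | zero => simp
  | succ s ih =>
    have key : ∀ j ∈ Finset.range (s + 1),
        2 ^ (s + 1 + 1) - 2 ^ j = 2 ^ (s+1) + (2 ^ (s + 1) - 2 ^ j) := by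
      intro j hj
      rw [Finset.mem_range] at hj
      have : 2 ^ j ≤ 2 ^ (s+1) := Nat.pow_le_pow_right (by norm_num) (by omega)
      rw [pow_succ]
      omega
    rw [Finset.sum_range_succ, Finset.sum_congr rfl key, Finset.sum_add_distrib, ih,
      Finset.sum_const, Finset.card_range]
    have h2 : (2:ℕ) ^ (s + 1 + 1) = 2 * 2 ^ (s+1) := by ring
    rw [h2]
    simp only [smul_eq_mul]
    generalize (2:ℕ) ^ (s+1) = x
    have : 2 * x - x = x := by omega
    rw [this]
    ring

/-- Sharp bound on the number of crossers. -/
lemma iX_card_le (hk : 2 ≤ k) (𝒮 : Finset (Finset (Fin n)))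
    (hSC : 𝒮 ⊆ intervalChain n k) {t : ℕ} (ht : t ≤ n) :
    (iX n 𝒮 t).card ≤ (k - 2) * 2 ^ (k - 1) + 1 := by
  classical
  set X := iX n 𝒮 t with hX
  set Y : ℕ → Finset (Finset (Fin n)) := fun j =>
    X.filter (fun S => initSeg n (t-1-j) ⊆ S ∧ ∀ x ∈ S, (x:ℕ) ≠ t-1-j) with hY
  have hXmem : ∀ S ∈ X, S ∈ 𝒮 ∧ ¬ S ⊆ initSeg n t ∧ ¬ initSeg n t ⊆ S := by
    intro S hS
    simpa [hX, iX, Finset.mem_filter] using hS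
  have hcover : X ⊆ (Finset.range (min (k-1) t)).biUnion Y := by
    intro S hS
    obtain ⟨hS𝒮, hnsub, hnsup⟩ := hXmem S hS
    obtain ⟨i, hi1, hi2⟩ := mem_intervalChain (hSC hS𝒮)
    obtain ⟨x, hxS, hxn⟩ := Finset.not_subset.mp hnsub
    have hxt : t ≤ (x:ℕ) := by
      by_contra hc
      exact hxn (mem_initSeg.mpr (by omega))
    obtain ⟨z, hzt, hzS⟩ := Finset.not_subset.mp hnsup
    have hzval : (z:ℕ) < t := mem_initSeg.mp hzt
    set M := Finset.univ.filter (fun w : Fin n => w ∉ S ∧ (w:ℕ) < t) with hM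
    have hMne : M.Nonempty := ⟨z, by simp [hM, hzS, hzval]⟩
    set a := M.min' hMne with ha
    have haM : a ∉ S ∧ (a:ℕ) < t := by
      have := M.min'_mem hMne
      simpa [hM] using this
    have hminM : ∀ w : Fin n, w ∉ S → (w:ℕ) < t → (a:ℕ) ≤ (w:ℕ) := by
      intro w h1 h2
      exact M.min'_le w (by simp [hM, h1, h2])
    have hseg : initSeg n (a:ℕ) ⊆ S := by
      intro w hw
      have hwv : (w:ℕ) < (a:ℕ) := mem_initSeg.mp hw
      by_contra hc
      have := hminM w hc (by omega)
      omega
    have hia : i ≤ (a:ℕ) := by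
      by_contra hc
      exact haM.1 (hi1 (mem_initSeg.mpr (by omega)))
    have hxik : (x:ℕ) < i + k := mem_initSeg.mp (hi2 hxS)
    have htik : t + 1 ≤ i + k := by omega
    rw [Finset.mem_biUnion]
    refine ⟨t - 1 - (a:ℕ), Finset.mem_range.mpr (by omega), ?_⟩
    rw [hY, Finset.mem_filter]
    have hav : t - 1 - (t - 1 - (a:ℕ)) = (a:ℕ) := by omega
    rw [hav]
    refine ⟨hS, hseg, ?_⟩
    intro w hwS hwv
    exact haM.1 ((Fin.ext hwv : w = a) ▸ hwS)
  have hpiece : ∀ j, j < k-1 → j < t → (Y j).card ≤ 2^(k-1) - 2^j := by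
    intro j hjk hjt
    set a₀ := t - 1 - j with ha₀
    have hat : a₀ + 1 + j = t := by omega
    have htak : t ≤ a₀ + k := by omega
    have han : a₀ + 1 ≤ n := by omega
    set V := initSeg n (a₀+k) \ initSeg n (a₀+1) with hV
    set T := V.powerset.filter (fun T => ¬ T ⊆ initSeg n t) with hT
    have hYmem : ∀ S ∈ Y j, S ∈ 𝒮 ∧ ¬ S ⊆ initSeg n t ∧ ¬ initSeg n t ⊆ S ∧
        initSeg n a₀ ⊆ S ∧ ∀ x ∈ S, (x:ℕ) ≠ a₀ := by
      intro S hS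
      rw [hY, Finset.mem_filter] at hS
      obtain ⟨hSX, h1, h2⟩ := hS
      obtain ⟨hS𝒮, h3, h4⟩ := hXmem S hSX
      exact ⟨hS𝒮, h3, h4, h1, h2⟩
    have hwit : ∀ S ∈ Y j, ∃ i, initSeg n i ⊆ S ∧ S ⊆ initSeg n (i+k) ∧ i ≤ a₀ := by
      intro S hS
      obtain ⟨hS𝒮, h3, h4, h5, h6⟩ := hYmem S hS
      obtain ⟨i, hi1, hi2⟩ := mem_intervalChain (hSC hS𝒮)
      refine ⟨i, hi1, hi2, ?_⟩
      by_contra hc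
      exact h6 ⟨a₀, by omega⟩ (hi1 (mem_initSeg.mpr (by simp; omega))) rfl
    have hle : (Y j).card ≤ T.card := by
      apply Finset.card_le_card_of_injOn (fun S => S ∩ V)
      · intro S hS
        obtain ⟨hS𝒮, h3, h4, h5, h6⟩ := hYmem S hS
        obtain ⟨i, hi1, hi2, hia⟩ := hwit S hS
        obtain ⟨x, hxS, hxn⟩ := Finset.not_subset.mp h3
        have hxt : t ≤ (x:ℕ) := by
          by_contra hc
          exact hxn (mem_initSeg.mpr (by omega))
        have hxik : (x:ℕ) < i + k := mem_initSeg.mp (hi2 hxS)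
        have hxV : x ∈ V := by
          simp only [hV, Finset.mem_sdiff, mem_initSeg]
          omega
        rw [hT, Finset.mem_coe, Finset.mem_filter, Finset.mem_powerset]
        refine ⟨Finset.inter_subset_right, ?_⟩
        intro hc
        exact hxn (hc (Finset.mem_inter.mpr ⟨hxS, hxV⟩))
      · intro S₁ h1 S₂ h2 h12
        simp only [Finset.mem_coe] at h1 h2
        have key : ∀ A ∈ Y j, ∀ B ∈ Y j, A ∩ V = B ∩ V → A ⊆ B := by
          intro A hA B hB hAB z hzA
          obtain ⟨hA𝒮, hA3, hA4, hA5, hA6⟩ := hYmem A hA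
          obtain ⟨iA, hiA1, hiA2, hiAa⟩ := hwit A hA
          obtain ⟨hB𝒮, hB3, hB4, hB5, hB6⟩ := hYmem B hB
          have hzAk : (z:ℕ) < iA + k := mem_initSeg.mp (hiA2 hzA)
          have hza : (z:ℕ) ≠ a₀ := hA6 z hzA
          by_cases c1 : (z:ℕ) < a₀
          · exact hB5 (mem_initSeg.mpr c1)
          · have hzV : z ∈ V := by
              simp only [hV, Finset.mem_sdiff, mem_initSeg]
              omega
            have : z ∈ B ∩ V := by
              rw [← hAB]; exact Finset.mem_inter.mpr ⟨hzA, hzV⟩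
            exact (Finset.mem_inter.mp this).1
        exact Finset.Subset.antisymm (key S₁ h1 S₂ h2 h12) (key S₂ h2 S₁ h1 h12.symm)
    have hTcard : T.card = 2 ^ V.card - 2 ^ j := by
      have hsplit := Finset.card_filter_add_card_filter_not
        (s := V.powerset) (p := fun T => T ⊆ initSeg n t)
      have hposet : V.powerset.filter (fun T => T ⊆ initSeg n t)
          = (V ∩ initSeg n t).powerset := by
        ext A
        simp only [Finset.mem_filter, Finset.mem_powerset, Finset.subset_inter_iff]
      have hVt : V ∩ initSeg n t = initSeg n t \ initSeg n (a₀+1) := by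
        ext z
        simp only [hV, Finset.mem_inter, Finset.mem_sdiff, mem_initSeg]
        omega
      have hVtcard : (V ∩ initSeg n t).card = j := by
        rw [hVt, Finset.card_sdiff_of_subset (initSeg_mono (by omega)), initSeg_card, initSeg_card]
        omega
      rw [hposet, Finset.card_powerset, Finset.card_powerset, hVtcard] at hsplit
      rw [hT]
      omega
    have hVcard : V.card ≤ k - 1 := by
      rw [hV, Finset.card_sdiff_of_subset (initSeg_mono (by omega)), initSeg_card, initSeg_card]
      omega
    rw [hTcard] at hle
    exact hle.trans (Nat.sub_le_sub_right (Nat.pow_le_pow_right (by norm_num) hVcard) _)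
  have h1 : X.card ≤ ∑ j ∈ Finset.range (min (k-1) t), (Y j).card :=
    (Finset.card_le_card hcover).trans Finset.card_biUnion_le
  have h2 : ∑ j ∈ Finset.range (min (k-1) t), (Y j).card
      ≤ ∑ j ∈ Finset.range (min (k-1) t), (2^(k-1) - 2^j) := by
    apply Finset.sum_le_sum
    intro j hj
    rw [Finset.mem_range] at hj
    exact hpiece j (by omega) (by omega)
  have h3 : ∑ j ∈ Finset.range (min (k-1) t), (2^(k-1) - 2^j)
      ≤ ∑ j ∈ Finset.range (k-1), (2^(k-1) - 2^j) :=
    Finset.sum_le_sum_of_subset (Finset.range_subset_range.mpr (by omega))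
  have h4 : ∑ j ∈ Finset.range (k-1), (2^(k-1) - 2^j) = (k-2)*2^(k-1) + 1 := by
    have hs : k - 1 = (k-2) + 1 := by omega
    rw [hs]
    exact sum_pow_identity (k-2)
  rw [← h4]
  exact h1.trans (h2.trans h3)

/-- Bound on new sets entering the bottom part when going from `t-1` to `t`. -/
lemma newsets_card (hk : 2 ≤ k) (𝒮 : Finset (Finset (Fin n)))
    (hSC : 𝒮 ⊆ intervalChain n k) {t : ℕ} (ht : 1 ≤ t) :
    ((iB n 𝒮 t) \ (iB n 𝒮 (t - 1))).card ≤ 2 ^ (k - 1) ∧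
    (initSeg n (t - 1) ∉ (iB n 𝒮 t) \ (iB n 𝒮 (t - 1)) →
      ((iB n 𝒮 t) \ (iB n 𝒮 (t - 1))).card ≤ 2 ^ (k - 1) - 1) := by
  classical
  set W := initSeg n (t-1) \ initSeg n (t-k) with hW
  set N := (iB n 𝒮 t) \ (iB n 𝒮 (t - 1)) with hN
  have hC1mem : ∀ S ∈ N, S ≠ initSeg n (t-1) →
      (S ∈ 𝒮 ∧ S ⊆ initSeg n t ∧ S ≠ initSeg n t ∧ ∃ x ∈ S, (x:ℕ) = t-1) := by
    intro S hS hne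
    simp only [hN, Finset.mem_sdiff, iB, Finset.mem_filter] at hS
    obtain ⟨⟨hS𝒮, hsub, hneq⟩, hnot⟩ := hS
    refine ⟨hS𝒮, hsub, hneq, ?_⟩
    by_cases hsub' : S ⊆ initSeg n (t-1)
    · exact absurd ⟨hS𝒮, hsub', hne⟩ hnot
    · obtain ⟨x, hxS, hx⟩ := Finset.not_subset.mp hsub'
      have h1 : (x:ℕ) < t := mem_initSeg.mp (hsub hxS)
      have h2 : ¬ (x:ℕ) < t-1 := fun c => hx (mem_initSeg.mpr c)
      exact ⟨x, hxS, by omega⟩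
  have hlow : ∀ S ∈ 𝒮, (∃ x ∈ S, (x:ℕ) = t-1) → initSeg n (t-k) ⊆ S := by
    rintro S hS ⟨x, hxS, hx⟩
    obtain ⟨i, hi1, hi2⟩ := mem_intervalChain (hSC hS)
    have : (x:ℕ) < i + k := mem_initSeg.mp (hi2 hxS)
    exact (initSeg_mono (by omega)).trans hi1
  have hfull : ∀ S ∈ N, S ≠ initSeg n (t-1) → S ∩ W ≠ W := by
    intro S hS hne hcon
    obtain ⟨hS𝒮, hsub, hneq, x, hxS, hx⟩ := hC1mem _ hS hne
    have hl := hlow _ hS𝒮 ⟨x, hxS, hx⟩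
    apply hneq
    apply Finset.Subset.antisymm hsub
    intro z hz
    have hzv : (z:ℕ) < t := mem_initSeg.mp hz
    by_cases c1 : (z:ℕ) < t-k
    · exact hl (mem_initSeg.mpr c1)
    · by_cases c2 : (z:ℕ) = t-1
      · have hzx : z = x := Fin.ext (by omega)
        rw [hzx]; exact hxS
      · have hzW : z ∈ W := by
          simp only [hW, Finset.mem_sdiff, mem_initSeg]
          omega
        have : z ∈ S ∩ W := by rw [hcon]; exact hzW
        exact (Finset.mem_inter.mp this).1
  have hext : ∀ S₁ ∈ N, ∀ S₂ ∈ N, S₁ ≠ initSeg n (t-1) → S₂ ≠ initSeg n (t-1) →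
      S₁ ∩ W = S₂ ∩ W → S₁ = S₂ := by
    intro S₁ h1 S₂ h2 hne1 hne2 hW12
    obtain ⟨h1𝒮, h1sub, h1neq, x₁, hx₁S, hx₁⟩ := hC1mem _ h1 hne1
    obtain ⟨h2𝒮, h2sub, h2neq, x₂, hx₂S, hx₂⟩ := hC1mem _ h2 hne2
    have hl1 := hlow _ h1𝒮 ⟨x₁, hx₁S, hx₁⟩
    have hl2 := hlow _ h2𝒮 ⟨x₂, hx₂S, hx₂⟩
    have key : ∀ (A B : Finset (Fin n)) (xB : Fin n), A ⊆ initSeg n t → initSeg n (t-k) ⊆ B →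
        xB ∈ B → (xB:ℕ) = t-1 → A ∩ W = B ∩ W → A ⊆ B := by
      intro A B xB hAsub hBlow hxB hxBval hAB z hzA
      have hz : (z:ℕ) < t := mem_initSeg.mp (hAsub hzA)
      by_cases c1 : (z:ℕ) < t-k
      · exact hBlow (mem_initSeg.mpr c1)
      · by_cases c2 : (z:ℕ) = t-1
        · have hzx : z = xB := Fin.ext (by omega)
          rw [hzx]; exact hxB
        · have hzW : z ∈ W := by
            simp only [hW, Finset.mem_sdiff, mem_initSeg]
            omega
          have : z ∈ B ∩ W := by rw [← hAB]; exact Finset.mem_inter.mpr ⟨hzA, hzW⟩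
          exact (Finset.mem_inter.mp this).1
    exact Finset.Subset.antisymm (key S₁ S₂ x₂ h1sub hl2 hx₂S hx₂ hW12)
      (key S₂ S₁ x₁ h2sub hl1 hx₁S hx₁ hW12.symm)
  have hcard1 : (N.erase (initSeg n (t-1))).card ≤ 2 ^ (k-1) - 1 := by
    have hle : (N.erase (initSeg n (t-1))).card ≤ (W.powerset.erase W).card := by
      apply Finset.card_le_card_of_injOn (fun S => S ∩ W)
      · intro S hS
        have hSm := Finset.mem_of_mem_erase hS
        have hSne := Finset.ne_of_mem_erase hS
        simp only [Finset.mem_coe, Finset.mem_erase, Finset.mem_powerset]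
        exact ⟨hfull S hSm hSne, Finset.inter_subset_right⟩
      · intro S₁ h1 S₂ h2 h12
        exact hext S₁ (Finset.mem_of_mem_erase h1) S₂ (Finset.mem_of_mem_erase h2)
          (Finset.ne_of_mem_erase h1) (Finset.ne_of_mem_erase h2) h12
    rw [Finset.card_erase_of_mem (Finset.mem_powerset_self W), Finset.card_powerset] at hle
    refine hle.trans ?_
    have hWcard : W.card ≤ k - 1 := by
      rw [hW, Finset.card_sdiff_of_subset (initSeg_mono (by omega)), initSeg_card, initSeg_card]
      omega
    exact Nat.sub_le_sub_right (Nat.pow_le_pow_right (by norm_num) hWcard) 1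
  have h2pow : 1 ≤ 2 ^ (k-1) := Nat.one_le_two_pow
  constructor
  · by_cases hmem : initSeg n (t-1) ∈ N
    · have := Finset.card_erase_of_mem hmem
      omega
    · rw [← Finset.erase_eq_of_notMem hmem]
      omega
  · intro hnm
    rw [← Finset.erase_eq_of_notMem hnm]
    exact hcard1

/-- The cut lemma: we can split off a bottom block of size `≥ m` wasting at most
`(3k-5)2^(k-2)` sets. -/
lemma cut_lemma (hk : 2 ≤ k) (𝒮 : Finset (Finset (Fin n)))
    (hSC : 𝒮 ⊆ intervalChain n k) (m : ℕ)
    (hm : m + (3 * k - 5) * 2 ^ (k - 2) ≤ 𝒮.card) :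
    ∃ B R : Finset (Finset (Fin n)), B ⊆ 𝒮 ∧ R ⊆ 𝒮 ∧ Disjoint B R ∧
      (∀ S ∈ B, ∀ S' ∈ R, S ⊆ S') ∧ m ≤ B.card ∧
      𝒮.card ≤ R.card + m + (3 * k - 5) * 2 ^ (k - 2) := by
  classical
  have hBsub : ∀ t, iB n 𝒮 t ⊆ 𝒮 := fun t => Finset.filter_subset _ _
  have hRsub : ∀ t, iR n 𝒮 t ⊆ 𝒮 := fun t => Finset.filter_subset _ _
  have hdisj : ∀ t, Disjoint (iB n 𝒮 t) (iR n 𝒮 t) := by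
    intro t
    rw [Finset.disjoint_left]
    intro S hSB hSR
    rw [iB, Finset.mem_filter] at hSB
    rw [iR, Finset.mem_filter] at hSR
    exact hSB.2.2 (Finset.Subset.antisymm hSB.2.1 hSR.2)
  have hcomp : ∀ t, ∀ S ∈ iB n 𝒮 t, ∀ S' ∈ iR n 𝒮 t, S ⊆ S' := by
    intro t S hS S' hS'
    rw [iB, Finset.mem_filter] at hS
    rw [iR, Finset.mem_filter] at hS'
    exact hS.2.1.trans hS'.2
  have hSsplit : ∀ t, 𝒮.card ≤ (iR n 𝒮 t).card + (iB n 𝒮 t).card + (iX n 𝒮 t).card := by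
    intro t
    have hcov : 𝒮 ⊆ (iR n 𝒮 t ∪ iB n 𝒮 t) ∪ iX n 𝒮 t := by
      intro S hS
      simp only [Finset.mem_union, iR, iB, iX, Finset.mem_filter]
      by_cases h1 : initSeg n t ⊆ S
      · exact Or.inl (Or.inl ⟨hS, h1⟩)
      · by_cases h2 : S ⊆ initSeg n t
        · exact Or.inl (Or.inr ⟨hS, h2, fun he => h1 (by rw [he])⟩)
        · exact Or.inr ⟨hS, h2, h1⟩
    calc 𝒮.card ≤ ((iR n 𝒮 t ∪ iB n 𝒮 t) ∪ iX n 𝒮 t).card := Finset.card_le_card hcov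
      _ ≤ (iR n 𝒮 t ∪ iB n 𝒮 t).card + (iX n 𝒮 t).card := Finset.card_union_le _ _
      _ ≤ (iR n 𝒮 t).card + (iB n 𝒮 t).card + (iX n 𝒮 t).card :=
          Nat.add_le_add_right (Finset.card_union_le _ _) _
  rcases Nat.eq_zero_or_pos m with rfl | hm1
  · exact ⟨∅, 𝒮, Finset.empty_subset _, subset_rfl, Finset.disjoint_empty_left _,
      by simp, by simp, by omega⟩
  have hD1 : 1 ≤ (3 * k - 5) * 2 ^ (k - 2) := by
    have h1 : 1 ≤ 3 * k - 5 := by omega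
    have h2 : 1 ≤ 2 ^ (k - 2) := Nat.one_le_two_pow
    calc 1 = 1 * 1 := rfl
      _ ≤ (3 * k - 5) * 2 ^ (k - 2) := Nat.mul_le_mul h1 h2
  have hn : m ≤ (iB n 𝒮 n).card := by
    have hsub : 𝒮.erase (initSeg n n) ⊆ iB n 𝒮 n := by
      intro S hS
      rw [iB, Finset.mem_filter]
      refine ⟨Finset.mem_of_mem_erase hS, ?_, Finset.ne_of_mem_erase hS⟩
      rw [initSeg_self]
      exact Finset.subset_univ S
    have h1 := Finset.card_le_card hsub
    have h2 : 𝒮.card - 1 ≤ (𝒮.erase (initSeg n n)).card := Finset.pred_card_le_card_erase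
    omega
  have hexist : ∃ t, m ≤ (iB n 𝒮 t).card := ⟨n, hn⟩
  set t₀ := Nat.find hexist with ht₀def
  have ht₀spec : m ≤ (iB n 𝒮 t₀).card := Nat.find_spec hexist
  have ht₀le : t₀ ≤ n := Nat.find_min' hexist hn
  have ht₀pos : 1 ≤ t₀ := by
    rcases Nat.eq_zero_or_pos t₀ with h0 | h
    · exfalso
      rw [h0] at ht₀spec
      have hemp : iB n 𝒮 0 = ∅ := by
        rw [iB]
        apply Finset.filter_false_of_mem
        intro S hS
        rintro ⟨h1, h2⟩
        apply h2
        have : initSeg n 0 = ∅ := by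
          ext x
          simp [mem_initSeg]
        rw [this] at h1 ⊢
        exact Finset.subset_empty.mp h1
      rw [hemp] at ht₀spec
      simp at ht₀spec
      omega
    · exact h
  have hprev : (iB n 𝒮 (t₀ - 1)).card ≤ m - 1 := by
    have := Nat.find_min hexist (show t₀ - 1 < t₀ by omega)
    omega
  obtain ⟨hNle, hNlt⟩ := newsets_card hk 𝒮 hSC (t := t₀) ht₀pos
  have hBNcard : (iB n 𝒮 t₀).card
      ≤ (iB n 𝒮 t₀ \ iB n 𝒮 (t₀ - 1)).card + (iB n 𝒮 (t₀ - 1)).card :=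
    Finset.card_le_card_sdiff_add_card
  rcases (by omega : 3 ≤ k ∨ k = 2) with hk3 | hk2
  · -- case k ≥ 3 : the straightforward cut at t₀
    refine ⟨iB n 𝒮 t₀, iR n 𝒮 t₀, hBsub t₀, hRsub t₀, hdisj t₀, hcomp t₀, ht₀spec, ?_⟩
    have h1 := hSsplit t₀
    have h2 := iX_card_le hk 𝒮 hSC ht₀le
    have key : 2 ^ (k - 1) + ((k - 2) * 2 ^ (k - 1) + 1) ≤ 1 + (3 * k - 5) * 2 ^ (k - 2) := by
      have hpow : (2:ℕ) ^ (k - 1) = 2 ^ (k - 2) * 2 := by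
        rw [show k - 1 = (k - 2) + 1 by omega, pow_succ]
      rw [hpow]
      have hco : 2 + (k - 2) * 2 ≤ 3 * k - 5 := by omega
      have hmul := Nat.mul_le_mul_right (2 ^ (k - 2)) hco
      have hexp : (2 + (k - 2) * 2) * 2 ^ (k - 2)
          = 2 ^ (k - 2) * 2 + (k - 2) * (2 ^ (k - 2) * 2) := by ring
      omega
    omega
  · -- case k = 2
    subst hk2
    have hX0 : (iX n 𝒮 t₀).card ≤ 1 := by
      have := iX_card_le (le_refl 2) 𝒮 hSC ht₀le
      norm_num at this
      exact this
    by_cases hb : (iB n 𝒮 t₀).card ≤ m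
    · refine ⟨iB n 𝒮 t₀, iR n 𝒮 t₀, hBsub t₀, hRsub t₀, hdisj t₀, hcomp t₀, ht₀spec, ?_⟩
      have h1 := hSsplit t₀
      norm_num
      omega
    · -- overshoot case: fall back to a cut at t₀ - 1 with the initial segment promoted
      have hNle' : (iB n 𝒮 t₀ \ iB n 𝒮 (t₀ - 1)).card ≤ 2 := by
        norm_num at hNle
        exact hNle
      have hmemN : initSeg n (t₀ - 1) ∈ iB n 𝒮 t₀ \ iB n 𝒮 (t₀ - 1) := by
        by_contra hc
        have := hNlt hc
        norm_num at this
        omega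
      have hmem𝒮 : initSeg n (t₀ - 1) ∈ 𝒮 := by
        have := (Finset.mem_sdiff.mp hmemN).1
        exact hBsub t₀ this
      have hnotB : initSeg n (t₀ - 1) ∉ iB n 𝒮 (t₀ - 1) := (Finset.mem_sdiff.mp hmemN).2
      refine ⟨insert (initSeg n (t₀ - 1)) (iB n 𝒮 (t₀ - 1)),
        𝒮.filter (fun S => initSeg n (t₀ - 1) ⊆ S ∧ S ≠ initSeg n (t₀ - 1)), ?_, ?_, ?_, ?_, ?_, ?_⟩
      · exact Finset.insert_subset hmem𝒮 (hBsub _)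
      · exact Finset.filter_subset _ _
      · rw [Finset.disjoint_left]
        intro S hSB hSR
        rw [Finset.mem_filter] at hSR
        rcases Finset.mem_insert.mp hSB with rfl | hSB'
        · exact hSR.2.2 rfl
        · rw [iB, Finset.mem_filter] at hSB'
          exact hSB'.2.2 (Finset.Subset.antisymm hSB'.2.1 hSR.2.1)
      · intro S hS S' hS'
        rw [Finset.mem_filter] at hS'
        rcases Finset.mem_insert.mp hS with rfl | hSB'
        · exact hS'.2.1
        · rw [iB, Finset.mem_filter] at hSB'
          exact hSB'.2.1.trans hS'.2.1
      · rw [Finset.card_insert_of_notMem hnotB]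
        omega
      · -- cardinality bound
        set R' := 𝒮.filter (fun S => initSeg n (t₀ - 1) ⊆ S ∧ S ≠ initSeg n (t₀ - 1)) with hR'
        have hcov : 𝒮 ⊆ (R' ∪ iB n 𝒮 (t₀ - 1) ∪ iX n 𝒮 (t₀ - 1)) ∪ {initSeg n (t₀ - 1)} := by
          intro S hS
          simp only [Finset.mem_union, Finset.mem_singleton, hR', iB, iX, Finset.mem_filter]
          by_cases he : S = initSeg n (t₀ - 1)
          · exact Or.inr he
          · by_cases h1 : initSeg n (t₀ - 1) ⊆ S
            · exact Or.inl (Or.inl (Or.inl ⟨hS, h1, he⟩))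
            · by_cases h2 : S ⊆ initSeg n (t₀ - 1)
              · exact Or.inl (Or.inl (Or.inr ⟨hS, h2, he⟩))
              · exact Or.inl (Or.inr ⟨hS, h2, h1⟩)
        have hc1 := Finset.card_le_card hcov
        have hc2 := Finset.card_union_le (R' ∪ iB n 𝒮 (t₀ - 1) ∪ iX n 𝒮 (t₀ - 1))
          ({initSeg n (t₀ - 1)} : Finset (Finset (Fin n)))
        have hc3 := Finset.card_union_le (R' ∪ iB n 𝒮 (t₀ - 1)) (iX n 𝒮 (t₀ - 1))
        have hc4 := Finset.card_union_le R' (iB n 𝒮 (t₀ - 1))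
        have hX1 : (iX n 𝒮 (t₀ - 1)).card ≤ 1 := by
          have := iX_card_le (le_refl 2) 𝒮 hSC (show t₀ - 1 ≤ n by omega)
          norm_num at this
          exact this
        have hsing : ({initSeg n (t₀ - 1)} : Finset (Finset (Fin n))).card = 1 :=
          Finset.card_singleton _
        norm_num
        omega

/-- Iterating the cut lemma to get `h` blocks. -/
lemma blocks_lemma (hk : 2 ≤ k) :
    ∀ (h : ℕ) (𝒮 : Finset (Finset (Fin n))), 𝒮 ⊆ intervalChain n k →
    ∀ m : ℕ → ℕ, (∑ j ∈ Finset.range h, m j) + (h - 1) * ((3 * k - 5) * 2 ^ (k - 2)) ≤ 𝒮.card →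
    ∃ B : ℕ → Finset (Finset (Fin n)),
      (∀ j, j < h → B j ⊆ 𝒮 ∧ m j ≤ (B j).card) ∧
      (∀ j j', j < j' → j' < h →
        Disjoint (B j) (B j') ∧ ∀ S ∈ B j, ∀ S' ∈ B j', S ⊆ S') := by
  classical
  intro h
  induction h with
  | zero =>
    intro 𝒮 _ m _
    exact ⟨fun _ => ∅, fun j hj => absurd hj (by omega), fun j j' _ hj' => absurd hj' (by omega)⟩
  | succ h ih =>
    intro 𝒮 hSC m hm
    rcases Nat.eq_zero_or_pos h with rfl | hpos
    · refine ⟨fun _ => 𝒮, ?_, ?_⟩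
      · intro j hj
        have hj0 : j = 0 := by omega
        subst hj0
        refine ⟨subset_rfl, ?_⟩
        rw [Finset.sum_range_one] at hm
        show m 0 ≤ 𝒮.card
        omega
      · intro j j' hjj' hj'
        omega
    · have hmono : m 0 + (3 * k - 5) * 2 ^ (k - 2) ≤ 𝒮.card := by
        have h1 : m 0 ≤ ∑ j ∈ Finset.range (h + 1), m j :=
          Finset.single_le_sum (f := m) (fun i _ => Nat.zero_le _)
            (Finset.mem_range.mpr (by omega))
        have h2 : (3 * k - 5) * 2 ^ (k - 2) ≤ (h + 1 - 1) * ((3 * k - 5) * 2 ^ (k - 2)) := by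
          have : h + 1 - 1 = h := by omega
          rw [this]
          exact Nat.le_mul_of_pos_left _ hpos
        omega
      obtain ⟨B₀, R, hB₀S, hRS, hdisj, hcomp, hB₀card, hScard⟩ :=
        cut_lemma hk 𝒮 hSC (m 0) hmono
      have hm' : (∑ j ∈ Finset.range h, m (j + 1)) + (h - 1) * ((3 * k - 5) * 2 ^ (k - 2))
          ≤ R.card := by
        have hsum : ∑ j ∈ Finset.range (h + 1), m j
            = (∑ j ∈ Finset.range h, m (j + 1)) + m 0 := Finset.sum_range_succ' m h
        have hmul : (h - 1) * ((3 * k - 5) * 2 ^ (k - 2)) + (3 * k - 5) * 2 ^ (k - 2)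
            = h * ((3 * k - 5) * 2 ^ (k - 2)) := by
          have : (h - 1) + 1 = h := by omega
          calc (h - 1) * ((3 * k - 5) * 2 ^ (k - 2)) + (3 * k - 5) * 2 ^ (k - 2)
              = ((h - 1) + 1) * ((3 * k - 5) * 2 ^ (k - 2)) := by ring
            _ = h * ((3 * k - 5) * 2 ^ (k - 2)) := by rw [this]
        have hsimp : h + 1 - 1 = h := by omega
        rw [hsimp] at hm
        rw [hsum] at hm
        omega
      obtain ⟨B', hB'1, hB'2⟩ := ih R (hRS.trans hSC) (fun j => m (j + 1)) hm'
      refine ⟨fun j => if j = 0 then B₀ else B' (j - 1), ?_, ?_⟩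
      · intro j hj
        by_cases hj0 : j = 0
        · subst hj0
          simpa using ⟨hB₀S, hB₀card⟩
        · have hB'j := hB'1 (j - 1) (by omega)
          have h2 := hB'j.2
          rw [show j - 1 + 1 = j by omega] at h2
          simp only [if_neg hj0]
          exact ⟨hB'j.1.trans hRS, h2⟩
      · intro j j' hjj' hj'
        have hj'0 : j' ≠ 0 := by omega
        by_cases hj0 : j = 0
        · subst hj0
          simp only [if_pos rfl, if_neg hj'0]
          have hsubR : B' (j' - 1) ⊆ R := (hB'1 (j' - 1) (by omega)).1
          constructor
          · exact hdisj.mono_right hsubR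
          · intro S hS S' hS'
            exact hcomp S hS S' (hsubR hS')
        · simp only [if_neg hj0, if_neg hj'0]
          exact hB'2 (j - 1) (j' - 1) (by omega) (by omega)

lemma exists_injOn_of_card_le {α β : Type*} [DecidableEq β] [Inhabited β]
    {s : Finset α} {t : Finset β} (h : s.card ≤ t.card) :
    ∃ f : α → β, Set.InjOn f ↑s ∧ ∀ a ∈ s, f a ∈ t := by
  obtain ⟨t', ht', hc⟩ := Finset.exists_subset_card_eq h
  have e := Finset.equivOfCardEq hc.symm
  classical
  refine ⟨fun a => if ha : a ∈ s then (e ⟨a, ha⟩ : β) else default, ?_, ?_⟩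
  · intro a ha b hb hab
    simp only [Finset.mem_coe] at ha hb
    simp only [dif_pos ha, dif_pos hb] at hab
    have := e.injective (Subtype.coe_injective hab)
    exact congrArg Subtype.val this
  · intro a ha
    simp only [dif_pos ha]
    exact ht' (e ⟨a, ha⟩).2

end IntervalChainProof

/-- Every subfamily of the `k`-interval chain of size at least
`|P| + (h-1)(3k-5)2^{k-2}` contains `P` as a weak subposet; equivalently
`α(C_k^0,P) ≤ |P| + (h-1)(3k-5)2^{k-2} - 1`. -/
theorem intervalChain_alpha_bound (n k : ℕ) (hk : 2 ≤ k)
    (P : Type*) [PartialOrder P] [Fintype P] (h : ℕ) (hh : isHeight P h)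
    (𝒮 : Finset (Finset (Fin n))) (h𝒮 : 𝒮 ⊆ intervalChain n k)
    (hcard : Fintype.card P + (h - 1) * (3 * k - 5) * 2 ^ (k - 2) ≤ 𝒮.card) :
    containsWeak 𝒮 P := by
  classical
  obtain ⟨⟨c, hcchain, hccard⟩, hub⟩ := hh
  set F : P → Finset (Finset P) := fun x =>
    Finset.univ.powerset.filter
      (fun s : Finset P => IsChain (· ≤ ·) (s : Set P) ∧ x ∈ s ∧ ∀ y ∈ s, y ≤ x) with hF
  set lev : P → ℕ := fun x => (F x).sup Finset.card with hlevdef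
  have hsingleton : ∀ x : P, ({x} : Finset P) ∈ F x := by
    intro x
    rw [hF, Finset.mem_filter, Finset.mem_powerset]
    refine ⟨Finset.subset_univ _, ?_, Finset.mem_singleton_self x, ?_⟩
    · rw [Finset.coe_singleton]
      exact Set.pairwise_singleton _ _
    · intro y hy
      rw [Finset.mem_singleton] at hy
      exact hy.le
  have hlev1 : ∀ x, 1 ≤ lev x := by
    intro x
    have hthis := Finset.le_sup (f := Finset.card) (hsingleton x)
    rw [Finset.card_singleton] at hthis
    exact hthis
  have hlevh : ∀ x, lev x ≤ h := by
    intro x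
    apply Finset.sup_le
    intro s hs
    rw [hF, Finset.mem_filter] at hs
    exact hub s hs.2.1
  have hmono : ∀ x y : P, x < y → lev x < lev y := by
    intro x y hxy
    have hne : (F x).Nonempty := ⟨{x}, hsingleton x⟩
    obtain ⟨s, hs, hcard⟩ := Finset.exists_mem_eq_sup (F x) hne Finset.card
    rw [hF, Finset.mem_filter, Finset.mem_powerset] at hs
    obtain ⟨hsub, hchain, hxs, hley⟩ := hs
    have hynotin : y ∉ s := fun hy => hxy.not_ge (hley y hy)
    have hins : insert y s ∈ F y := by
      rw [hF, Finset.mem_filter, Finset.mem_powerset]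
      refine ⟨Finset.subset_univ _, ?_, Finset.mem_insert_self _ _, ?_⟩
      · rw [Finset.coe_insert]
        exact hchain.insert (fun b hb _ => Or.inr ((hley b hb).trans hxy.le))
      · intro z hz
        rcases Finset.mem_insert.mp hz with rfl | hz'
        · exact le_refl _
        · exact (hley z hz').trans hxy.le
    have hle := Finset.le_sup (f := Finset.card) hins
    rw [Finset.card_insert_of_notMem hynotin] at hle
    have : lev x = s.card := hcard
    have : s.card + 1 ≤ lev y := hle
    omega
  set m : ℕ → ℕ := fun j => (Finset.univ.filter (fun x : P => lev x - 1 = j)).card with hm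
  have hxj : ∀ x : P, lev x - 1 < h := fun x => by
    have := hlev1 x
    have := hlevh x
    omega
  have hsum : Fintype.card P = ∑ j ∈ Finset.range h, m j := by
    rw [← Finset.card_univ]
    exact Finset.card_eq_sum_card_fiberwise
      (fun x _ => Finset.mem_range.mpr (hxj x))
  obtain ⟨B, hB1, hB2⟩ := IntervalChainProof.blocks_lemma hk h 𝒮 h𝒮 m (by
    have hassoc : (h - 1) * (3 * k - 5) * 2 ^ (k - 2)
        = (h - 1) * ((3 * k - 5) * 2 ^ (k - 2)) := by ring
    rw [← hsum, ← hassoc]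
    exact hcard)
  have hg : ∀ j : ℕ, ∃ g : P → Finset (Fin n),
      (j < h → Set.InjOn g (Finset.univ.filter (fun x : P => lev x - 1 = j) : Finset P) ∧
        ∀ a ∈ Finset.univ.filter (fun x : P => lev x - 1 = j), g a ∈ B j) := by
    intro j
    by_cases hj : j < h
    · obtain ⟨g, hg1, hg2⟩ := IntervalChainProof.exists_injOn_of_card_le ((hB1 j hj).2)
      exact ⟨g, fun _ => ⟨hg1, hg2⟩⟩
    · exact ⟨fun _ => ∅, fun c => absurd c hj⟩
  choose g hgspec using hg
  have hmemfib : ∀ x : P, x ∈ Finset.univ.filter (fun y : P => lev y - 1 = lev x - 1) :=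
    fun x => by simp
  refine ⟨fun x => g (lev x - 1) x, ?_, ?_, ?_⟩
  · intro x y hxy0
    have hxy : g (lev x - 1) x = g (lev y - 1) y := hxy0
    rcases lt_trichotomy (lev x - 1) (lev y - 1) with hlt | heq | hgt
    · exfalso
      have h1 := (hgspec (lev x - 1) (hxj x)).2 x (hmemfib x)
      have h2 := (hgspec (lev y - 1) (hxj y)).2 y (hmemfib y)
      have hd := (hB2 _ _ hlt (hxj y)).1
      rw [hxy] at h1
      exact Finset.disjoint_left.mp hd h1 h2
    · apply (hgspec (lev x - 1) (hxj x)).1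
      · exact Finset.mem_coe.mpr (hmemfib x)
      · rw [heq]
        exact Finset.mem_coe.mpr (hmemfib y)
      · rw [hxy, heq]
    · exfalso
      have h1 := (hgspec (lev x - 1) (hxj x)).2 x (hmemfib x)
      have h2 := (hgspec (lev y - 1) (hxj y)).2 y (hmemfib y)
      have hd := (hB2 _ _ hgt (hxj x)).1
      rw [hxy] at h1
      exact Finset.disjoint_left.mp hd h2 h1
  · intro x
    exact (hB1 _ (hxj x)).1 ((hgspec _ (hxj x)).2 x (hmemfib x))
  · intro x y hxy
    rcases eq_or_lt_of_le hxy with rfl | hlt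
    · exact subset_rfl
    · have hl := hmono x y hlt
      have hj : lev x - 1 < lev y - 1 := by
        have := hlev1 x
        omega
      exact (hB2 _ _ hj (hxj y)).2 _ ((hgspec _ (hxj x)).2 x (hmemfib x))
        _ ((hgspec _ (hxj y)).2 y (hmemfib y))
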